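/- A subset C ⊆ B_k^n is a B_k-submodule of B_k^n (i.e., a linear code over B_k of length n) if and only if there exist F_{p^r}-linear codes C_1,…,C_{2^k} ⊆ F_{p^r}^n such that C = Ψ̄_k^{−1}(C_1,…,C_{2^k}). -/

import Mathlib

open MvPolynomial

set_option synthInstance.maxHeartbeats 400000
set_option maxHeartbeats 1000000

noncomputable def relIdeal (p r k : ℕ) [Fact p.Prime] : Ideal (MvPolynomial (Fin k) (GaloisField p r)) :=
  Ideal.span (Set.range fun i : Fin k => X i ^ 2 - X i)

abbrev B (p r k : ℕ) [Fact p.Prime] :=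
  MvPolynomial (Fin k) (GaloisField p r) ⧸ relIdeal p r k

noncomputable def v (p r k : ℕ) [Fact p.Prime] (i : Fin k) : B p r k :=
  Ideal.Quotient.mk _ (X i)

lemma v_idem (p r k : ℕ) [Fact p.Prime] (i : Fin k) : v p r k i ^ 2 = v p r k i := by
  have h : (X i ^ 2 - X i : MvPolynomial (Fin k) (GaloisField p r)) ∈ relIdeal p r k :=
    Ideal.subset_span ⟨i, rfl⟩
  have h2 := (Ideal.Quotient.eq_zero_iff_mem).mpr h
  rw [map_sub, map_pow] at h2
  have h3 := sub_eq_zero.mp h2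
  simpa [v] using h3

lemma one_sub_v_idem (p r k : ℕ) [Fact p.Prime] (i : Fin k) :
    (1 - v p r k i) ^ 2 = 1 - v p r k i := by
  have h : (1 - v p r k i) ^ 2 = 1 - 2 * v p r k i + v p r k i ^ 2 := by ring
  rw [h, v_idem]; ring

noncomputable def ThAux (p r k : ℕ) [Fact p.Prime] (S : Finset (Fin k)) :
    MvPolynomial (Fin k) (GaloisField p r) →+* B p r k :=
  (aeval (fun i : Fin k => if i ∈ S then 1 - v p r k i else v p r k i)).toRingHom

lemma ThAux_cond (p r k : ℕ) [Fact p.Prime] (S : Finset (Fin k)) :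
    relIdeal p r k ≤ RingHom.ker (ThAux p r k S) := by
  refine Ideal.span_le.mpr ?_
  rintro _ ⟨i, rfl⟩
  simp only [SetLike.mem_coe, RingHom.mem_ker, ThAux, AlgHom.toRingHom_eq_coe,
    RingHom.coe_coe, map_sub, map_pow, aeval_X]
  by_cases h : i ∈ S
  · rw [if_pos h, one_sub_v_idem, sub_self]
  · rw [if_neg h, v_idem, sub_self]

/-- The automorphism `Θ_S` of `B_k`, determined by `v_i ↦ 1 - v_i` for `i ∈ S` and
`v_i ↦ v_i` otherwise, fixing `F_{p^r}` pointwise. -/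
noncomputable def Th (p r k : ℕ) [Fact p.Prime] (S : Finset (Fin k)) :
    B p r k →+* B p r k :=
  Ideal.Quotient.lift (relIdeal p r k) (ThAux p r k S) (fun _ ha => ThAux_cond p r k S ha)

noncomputable def LamAux (p r k : ℕ) [Fact p.Prime] (π : Equiv.Perm (Fin k)) (t : ℕ) :
    MvPolynomial (Fin k) (GaloisField p r) →+* B p r k :=
  eval₂Hom ((Ideal.Quotient.mk (relIdeal p r k)).comp
      ((C : GaloisField p r →+* MvPolynomial (Fin k) (GaloisField p r)).comp
        (iterateFrobenius (GaloisField p r) p t)))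
    (fun i => v p r k (π i))

lemma LamAux_cond (p r k : ℕ) [Fact p.Prime] (π : Equiv.Perm (Fin k)) (t : ℕ) :
    relIdeal p r k ≤ RingHom.ker (LamAux p r k π t) := by
  refine Ideal.span_le.mpr ?_
  rintro _ ⟨i, rfl⟩
  simp only [SetLike.mem_coe, RingHom.mem_ker, LamAux, map_sub, map_pow, eval₂Hom_X']
  rw [v_idem, sub_self]

/-- The automorphism `Λ_{π,t}` of `B_k`, acting on `F_{p^r}` as the Frobenius power
`α ↦ α^{p^t}` and sending `v_i ↦ v_{π(i)}`. -/
noncomputable def Lam (p r k : ℕ) [Fact p.Prime] (π : Equiv.Perm (Fin k)) (t : ℕ) :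
    B p r k →+* B p r k :=
  Ideal.Quotient.lift (relIdeal p r k) (LamAux p r k π t) (fun _ ha => LamAux_cond p r k π t ha)

noncomputable def PhiAux (p r k : ℕ) [Fact p.Prime] :
    MvPolynomial (Fin k) (GaloisField p r) →+* (Fin (2 ^ k) → GaloisField p r) :=
  Pi.ringHom fun j =>
    eval₂Hom (RingHom.id (GaloisField p r))
      (fun i : Fin k => if Nat.testBit (j : ℕ) (i : ℕ) then 1 else 0)

lemma PhiAux_cond (p r k : ℕ) [Fact p.Prime] :
    relIdeal p r k ≤ RingHom.ker (PhiAux p r k) := by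
  refine Ideal.span_le.mpr ?_
  rintro _ ⟨i, rfl⟩
  simp only [SetLike.mem_coe, RingHom.mem_ker, PhiAux]
  funext j
  show eval₂Hom (RingHom.id (GaloisField p r))
    (fun i : Fin k => if Nat.testBit (j : ℕ) (i : ℕ) then 1 else 0) (X i ^ 2 - X i) = 0
  simp only [map_sub, map_pow, eval₂Hom_X']
  by_cases h : Nat.testBit (j : ℕ) (i : ℕ) <;> simp [h]

/-- The Gray map `Φ_k : B_k → F_{p^r}^{2^k}`: the coordinate indexed by `j` is the
evaluation of (a representative of) an element of `B_k` at the point whose `i`-th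
coordinate is the `i`-th binary digit of `j`.  This agrees with the recursive
definition `Φ_k(α + β v_k) = (Φ_{k-1}(α), Φ_{k-1}(α + β))`, `Φ_0 = id`. -/
noncomputable def Phi (p r k : ℕ) [Fact p.Prime] :
    B p r k →+* (Fin (2 ^ k) → GaloisField p r) :=
  Ideal.Quotient.lift (relIdeal p r k) (PhiAux p r k) (fun _ ha => PhiAux_cond p r k ha)

section GrayAux

variable (p r k : ℕ) [Fact p.Prime]

lemma Phi_mk (q : MvPolynomial (Fin k) (GaloisField p r)) :
    Phi p r k (Ideal.Quotient.mk _ q) = PhiAux p r k q :=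
  Ideal.Quotient.lift_mk _ _ _

lemma Phi_algebraMap (c : GaloisField p r) (j : Fin (2 ^ k)) :
    Phi p r k (algebraMap (GaloisField p r) (B p r k) c) j = c := by
  have h : algebraMap (GaloisField p r) (B p r k) c
      = Ideal.Quotient.mk (relIdeal p r k) (MvPolynomial.C c) := rfl
  rw [h, Phi_mk]
  show eval₂Hom (RingHom.id (GaloisField p r))
    (fun i : Fin k => if Nat.testBit (j : ℕ) (i : ℕ) then (1 : GaloisField p r) else 0)
      (MvPolynomial.C c) = c
  simp

lemma Phi_smul (c : GaloisField p r) (x : B p r k) :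
    Phi p r k (c • x) = c • Phi p r k x := by
  have h : c • x = algebraMap (GaloisField p r) (B p r k) c * x := Algebra.smul_def c x
  rw [h, map_mul]
  funext j
  rw [Pi.mul_apply, Phi_algebraMap, Pi.smul_apply, smul_eq_mul]

/-- The Gray map as a linear map over the base field. -/
noncomputable def PhiL : B p r k →ₗ[GaloisField p r] (Fin (2 ^ k) → GaloisField p r) where
  toFun := Phi p r k
  map_add' := map_add _
  map_smul' := Phi_smul p r k

lemma Phi_v (i : Fin k) (j : Fin (2 ^ k)) :
    Phi p r k (v p r k i) j = if Nat.testBit (j : ℕ) (i : ℕ) then 1 else 0 := by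
  rw [v, Phi_mk]
  show eval₂Hom (RingHom.id (GaloisField p r))
    (fun i : Fin k => if Nat.testBit (j : ℕ) (i : ℕ) then (1 : GaloisField p r) else 0)
      (X i) = _
  simp

/-- The idempotent of `B_k` whose Gray image is the `j`-th standard basis vector. -/
noncomputable def eIdem (j : Fin (2 ^ k)) : B p r k :=
  ∏ i : Fin k, if Nat.testBit (j : ℕ) (i : ℕ) then v p r k i else 1 - v p r k i

lemma Phi_eIdem (j l : Fin (2 ^ k)) :
    Phi p r k (eIdem p r k j) l = if j = l then 1 else 0 := by
  have hfac : ∀ i : Fin k,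
      Phi p r k (if Nat.testBit (j : ℕ) (i : ℕ) then v p r k i else 1 - v p r k i) l
        = if Nat.testBit (j : ℕ) (i : ℕ) = Nat.testBit (l : ℕ) (i : ℕ) then 1 else 0 := by
    intro i
    by_cases hj : Nat.testBit (j : ℕ) (i : ℕ) <;>
      by_cases hl : Nat.testBit (l : ℕ) (i : ℕ) <;>
      simp [hj, hl, Phi_v]
  rw [eIdem, map_prod, Finset.prod_apply]
  simp_rw [hfac]
  by_cases hjl : j = l
  · subst hjl; simp
  · rw [if_neg hjl]
    have hex : ∃ i : Fin k, Nat.testBit (j : ℕ) (i : ℕ) ≠ Nat.testBit (l : ℕ) (i : ℕ) := by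
      by_contra hc
      push_neg at hc
      apply hjl
      apply Fin.ext
      apply Nat.eq_of_testBit_eq
      intro i
      by_cases hik : i < k
      · exact hc ⟨i, hik⟩
      · push_neg at hik
        rw [Nat.testBit_lt_two_pow, Nat.testBit_lt_two_pow]
        · exact lt_of_lt_of_le l.isLt (Nat.pow_le_pow_right (by norm_num) hik)
        · exact lt_of_lt_of_le j.isLt (Nat.pow_le_pow_right (by norm_num) hik)
    obtain ⟨i, hi⟩ := hex
    exact Finset.prod_eq_zero (Finset.mem_univ i) (by simp [hi])

lemma Phi_surjective : Function.Surjective (Phi p r k) := by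
  intro f
  refine ⟨∑ j : Fin (2 ^ k), f j • eIdem p r k j, ?_⟩
  funext l
  rw [map_sum, Finset.sum_apply]
  have h : ∀ j : Fin (2 ^ k), Phi p r k (f j • eIdem p r k j) l
      = if j = l then f j else 0 := by
    intro j
    rw [Phi_smul, Pi.smul_apply, smul_eq_mul, Phi_eIdem]
    by_cases hj : j = l <;> simp [hj]
  simp_rw [h]
  simp

lemma prod_v_mul_v (S : Finset (Fin k)) (i : Fin k) :
    (∏ j ∈ S, v p r k j) * v p r k i = ∏ j ∈ insert i S, v p r k j := by
  by_cases hi : i ∈ S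
  · rw [Finset.insert_eq_self.mpr hi]
    calc (∏ j ∈ S, v p r k j) * v p r k i
        = (v p r k i * v p r k i) * ∏ j ∈ S.erase i, v p r k j := by
          conv_lhs => rw [← Finset.insert_erase hi,
            Finset.prod_insert (Finset.notMem_erase i S)]
          ring
      _ = v p r k i * ∏ j ∈ S.erase i, v p r k j := by rw [← sq, v_idem]
      _ = ∏ j ∈ S, v p r k j := by
          rw [← Finset.prod_insert (Finset.notMem_erase i S), Finset.insert_erase hi]
  · rw [Finset.prod_insert hi, mul_comm]

lemma span_prod_v_top :
    Submodule.span (GaloisField p r)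
      (Set.range fun S : Finset (Fin k) => ∏ i ∈ S, v p r k i) = ⊤ := by
  have hmul : ∀ (i : Fin k), ∀ x ∈ Submodule.span (GaloisField p r)
      (Set.range fun S : Finset (Fin k) => ∏ i ∈ S, v p r k i),
      x * v p r k i ∈ Submodule.span (GaloisField p r)
        (Set.range fun S : Finset (Fin k) => ∏ i ∈ S, v p r k i) := by
    intro i x hx
    refine Submodule.span_induction ?_ ?_ ?_ ?_ hx
    · rintro _ ⟨S, rfl⟩
      rw [prod_v_mul_v]
      exact Submodule.subset_span ⟨insert i S, rfl⟩
    · rw [zero_mul]; exact Submodule.zero_mem _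
    · intro a b _ _ ha hb; rw [add_mul]; exact Submodule.add_mem _ ha hb
    · intro c a _ ha; rw [smul_mul_assoc]; exact Submodule.smul_mem _ _ ha
  rw [eq_top_iff]
  rintro x -
  obtain ⟨q, rfl⟩ := Ideal.Quotient.mk_surjective x
  induction q using MvPolynomial.induction_on with
  | C c =>
      have h : Ideal.Quotient.mk (relIdeal p r k) (MvPolynomial.C c)
          = c • (∏ i ∈ (∅ : Finset (Fin k)), v p r k i) := by
        rw [Finset.prod_empty, ← Algebra.algebraMap_eq_smul_one]; rfl
      rw [h]
      exact Submodule.smul_mem _ _ (Submodule.subset_span ⟨∅, rfl⟩)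
  | add f g hf hg => rw [map_add]; exact Submodule.add_mem _ hf hg
  | mul_X f i hf => rw [map_mul]; exact hmul i _ hf

instance : Module.Finite (GaloisField p r) (B p r k) := by
  classical
  exact ⟨⟨Finset.univ.image (fun S : Finset (Fin k) => ∏ i ∈ S, v p r k i), by
    rw [Finset.coe_image, Finset.coe_univ, Set.image_univ]; exact span_prod_v_top p r k⟩⟩

lemma Phi_bijective : Function.Bijective (Phi p r k) := by
  classical
  have hfin : Finite (B p r k) := Module.finite_of_finite (GaloisField p r)
  rw [Nat.bijective_iff_surjective_and_card]
  refine ⟨Phi_surjective p r k,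
    le_antisymm ?_ (Nat.card_le_card_of_surjective _ (Phi_surjective p r k))⟩
  have hg : Function.Surjective (fun c : Finset (Fin k) → GaloisField p r =>
      ∑ S : Finset (Fin k), c S • ∏ i ∈ S, v p r k i) := by
    intro x
    have hx : x ∈ Submodule.span (GaloisField p r)
        (Set.range fun S : Finset (Fin k) => ∏ i ∈ S, v p r k i) := by
      rw [span_prod_v_top]; trivial
    obtain ⟨c, hc⟩ := (Submodule.mem_span_range_iff_exists_fun (GaloisField p r)).mp hx
    exact ⟨c, hc⟩
  calc Nat.card (B p r k) ≤ Nat.card (Finset (Fin k) → GaloisField p r) :=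
        Nat.card_le_card_of_surjective _ hg
    _ = Nat.card (Fin (2 ^ k) → GaloisField p r) := by
        rw [Nat.card_fun, Nat.card_fun]
        congr 1
        simp [Nat.card_eq_fintype_card]

end GrayAux

/-- A subset `C ⊆ B_k^n` is a `B_k`-submodule (a linear code of length `n` over `B_k`)
iff there are `F_{p^r}`-linear codes `C_1, …, C_{2^k} ⊆ F_{p^r}^n` with
`C = Ψ̄_k^{-1}(C_1, …, C_{2^k})`. -/
theorem stmt_15 (p r k n : ℕ) [Fact p.Prime] [NeZero n] (hr : 1 ≤ r)
    (C : Set (Fin n → B p r k)) :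
    (∃ M : Submodule (B p r k) (Fin n → B p r k), C = (M : Set (Fin n → B p r k))) ↔
      ∃ D : Fin (2 ^ k) → Submodule (GaloisField p r) (Fin n → GaloisField p r),
        C = {a | ∀ i : Fin (2 ^ k), (fun b => Phi p r k (a b) i) ∈ D i} := by
  constructor
  · rintro ⟨M, rfl⟩
    classical
    let Li : (i : Fin (2 ^ k)) →
        (Fin n → B p r k) →ₗ[GaloisField p r] (Fin n → GaloisField p r) :=
      fun i => LinearMap.compLeft ((LinearMap.proj i).comp (PhiL p r k)) (Fin n)
    refine ⟨fun i => Submodule.map (Li i) (M.restrictScalars (GaloisField p r)), ?_⟩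
    ext a
    simp only [SetLike.mem_coe, Set.mem_setOf_eq]
    constructor
    · intro ha i
      exact Submodule.mem_map.mpr ⟨a, ha, rfl⟩
    · intro ha
      choose m hm hm2 using fun i => Submodule.mem_map.mp (ha i)
      have key : a = ∑ i : Fin (2 ^ k), eIdem p r k i • m i := by
        funext b
        apply (Phi_bijective p r k).injective
        funext l
        have h1 : Phi p r k ((∑ i : Fin (2 ^ k), eIdem p r k i • m i) b) l
            = Phi p r k (m l b) l := by
          rw [Finset.sum_apply, map_sum, Finset.sum_apply]
          have h2 : ∀ i : Fin (2 ^ k),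
              Phi p r k ((eIdem p r k i • m i) b) l
                = if i = l then Phi p r k (m i b) l else 0 := by
            intro i
            rw [Pi.smul_apply, smul_eq_mul, map_mul, Pi.mul_apply, Phi_eIdem]
            by_cases hil : i = l <;> simp [hil]
          simp_rw [h2]
          simp
        have h3 : Phi p r k (m l b) l = Phi p r k (a b) l := congrFun (hm2 l) b
        rw [h1, h3]
      rw [key]
      exact Submodule.sum_mem _ fun i _ => Submodule.smul_mem _ _ (hm i)
  · rintro ⟨D, rfl⟩
    refine ⟨{ carrier := {a | ∀ i : Fin (2 ^ k), (fun b => Phi p r k (a b) i) ∈ D i}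
              add_mem' := ?_
              zero_mem' := ?_
              smul_mem' := ?_ }, rfl⟩
    · intro a b ha hb i
      have h : (fun x => Phi p r k ((a + b) x) i)
          = (fun x => Phi p r k (a x) i) + fun x => Phi p r k (b x) i := by
        funext x; simp
      show (fun x => Phi p r k ((a + b) x) i) ∈ D i
      rw [h]
      exact Submodule.add_mem _ (ha i) (hb i)
    · intro i
      have h : (fun x => Phi p r k ((0 : Fin n → B p r k) x) i)
          = (0 : Fin n → GaloisField p r) := by
        funext x; simp
      show (fun x => Phi p r k ((0 : Fin n → B p r k) x) i) ∈ D i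
      rw [h]
      exact Submodule.zero_mem _
    · intro c a ha i
      have h : (fun x => Phi p r k ((c • a) x) i)
          = Phi p r k c i • fun x => Phi p r k (a x) i := by
        funext x
        rw [Pi.smul_apply, smul_eq_mul, map_mul, Pi.mul_apply, Pi.smul_apply, smul_eq_mul]
      show (fun x => Phi p r k ((c • a) x) i) ∈ D i
      rw [h]
      exact Submodule.smul_mem _ _ (ha i)
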